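/- Let K ⊆ K' be finite simplicial complexes with K' = K ∪ {σ} for a single p-simplex σ, and let σ̂ ∈ C^p(K') be the dual cochain of σ. Suppose H^har contains a new harmonic p-cycle, i.e., σ is positive. If ψ is any element of (Z_p(K') ∩ Z^p(K')) \ (Z_p(K) ∩ Z^p(K)), then when ψ is written in a basis of Z^p(K') consisting of a basis of Z^p(K) together with σ̂, the coefficient of σ̂ is nonzero; consequently ∂(σ̂), as a chain, lies in the span of {∂(b) : b ∈ B^p-basis of K extended to K'} together with boundaries coming from the decomposition of ψ. -/

import Mathlib

/-- Dimension of the homology group `Z/B`, computed as `Z` modulo the part of `B` inside `Z`. -/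
noncomputable def homologyDim {V : Type*} [AddCommGroup V] [Module ℝ V]
    (Z B : Submodule ℝ V) : ℕ :=
  Module.finrank ℝ (Z ⧸ (Submodule.comap Z.subtype B))

/-- Let `K' = K ∪ {σ}` for a single positive `p`-simplex `σ`, and let `σ̂` be
the dual cochain of `σ` (identified with `σ` itself).  If `ψ` is a harmonic `p`-cycle of
`K'` that is not a harmonic `p`-cycle of `K`, then in the decomposition of the cocycle
space `Z^p(K') = ℝσ̂ ⊕ Z^p(K)` the coefficient of `σ̂` in `ψ` is nonzero (equivalently
`⟪ψ, σ⟫ ≠ 0`); consequently `∂σ̂ = d1 σ` lies in the span of the boundaries of `p`-cochains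
of `K` appearing in the decomposition of `ψ`, i.e. in `d1(Z^p(K)) = d1((range d2)ᗮ ⊓ (ℝ∙σ)ᗮ)`.
Model: boundary maps `d2 = ∂_{p+1}`, `d1 = ∂_p` of `K'`; `C_p(K) = (ℝ∙σ)ᗮ`; `σ` has no
cofaces; `har_p(K') = ker d1 ⊓ (range d2)ᗮ`, `har_p(K) = har_p(K') ⊓ (ℝ∙σ)ᗮ`;
positivity of `σ` means `dim H_p(K') = dim H_p(K) + 1`. -/
theorem stmt15
    {C2 C1 C0 : Type*}
    [NormedAddCommGroup C2] [InnerProductSpace ℝ C2] [FiniteDimensional ℝ C2]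
    [NormedAddCommGroup C1] [InnerProductSpace ℝ C1] [FiniteDimensional ℝ C1]
    [NormedAddCommGroup C0] [InnerProductSpace ℝ C0] [FiniteDimensional ℝ C0]
    (d2 : C2 →ₗ[ℝ] C1) (d1 : C1 →ₗ[ℝ] C0)
    (hdd1 : d1 ∘ₗ d2 = 0)
    (σ : C1) (hσ : σ ≠ 0)
    (hcoface : LinearMap.range d2 ≤ (ℝ ∙ σ)ᗮ)
    (hpos : homologyDim (LinearMap.ker d1) (LinearMap.range d2) =
      homologyDim (LinearMap.ker d1 ⊓ (ℝ ∙ σ)ᗮ) (LinearMap.range d2) + 1)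
    (ψ : C1)
    (hψ : ψ ∈ LinearMap.ker d1 ⊓ (LinearMap.range d2)ᗮ)
    (hψ' : ψ ∉ LinearMap.ker d1 ⊓ (LinearMap.range d2)ᗮ ⊓ (ℝ ∙ σ)ᗮ) :
    (inner ℝ ψ σ : ℝ) ≠ 0 ∧
      d1 σ ∈ Submodule.map d1 ((LinearMap.range d2)ᗮ ⊓ (ℝ ∙ σ)ᗮ) := by
  have hne : (inner ℝ ψ σ : ℝ) ≠ 0 := by
    intro h
    exact hψ' ⟨hψ, Submodule.mem_orthogonal_singleton_iff_inner_left.mpr h⟩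
  refine ⟨hne, ?_⟩
  set t : ℝ := (‖σ‖ ^ 2) / (inner ℝ ψ σ : ℝ) with ht
  refine ⟨σ - t • ψ, ⟨?_, ?_⟩, ?_⟩
  · -- σ - t • ψ ∈ (range d2)ᗮ
    have hσmem : σ ∈ (LinearMap.range d2)ᗮ := by
      intro u hu
      have := hcoface hu σ (Submodule.mem_span_singleton_self σ)
      rwa [real_inner_comm] at this
    exact Submodule.sub_mem _ hσmem (Submodule.smul_mem _ _ hψ.2)
  · -- orthogonal to σ
    rw [SetLike.mem_coe, Submodule.mem_orthogonal_singleton_iff_inner_left, inner_sub_left,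
      real_inner_smul_left, real_inner_self_eq_norm_sq, ht,
      div_mul_cancel₀ _ hne, sub_self]
  · have : d1 ψ = 0 := hψ.1
    simp [map_sub, map_smul, this]
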